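/- The function V₀(x,y) = exp(−2μx²/(x²+y²))·(x²+y²)³ is an inverse integrating factor of the system ẋ = −y((2μ+1)x² + y²) + x³(λ₁x² + λ₂(x²+y²)), ẏ = x(x² + (1−2μ)y²) + x²y(λ₁x² + λ₂(x²+y²)) on ℝ² \ {(0,0)}. -/

import Mathlib

/-- `V₀ = exp(-2μx²/(x²+y²))·(x²+y²)³` is an inverse integrating factor of
`ẋ = -y((2μ+1)x² + y²) + x³(λ₁x² + λ₂(x²+y²))`,
`ẏ = x(x² + (1-2μ)y²) + x²y(λ₁x² + λ₂(x²+y²))` on `ℝ² \ {(0,0)}`. -/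
theorem stmt_13 (μ l₁ l₂ : ℝ) :
    ∀ x y : ℝ, (x, y) ≠ ((0 : ℝ), (0 : ℝ)) →
      (-y * ((2 * μ + 1) * x ^ 2 + y ^ 2) + x ^ 3 * (l₁ * x ^ 2 + l₂ * (x ^ 2 + y ^ 2)))
          * deriv (fun x' =>
              Real.exp (-2 * μ * x' ^ 2 / (x' ^ 2 + y ^ 2)) * (x' ^ 2 + y ^ 2) ^ 3) x
        + (x * (x ^ 2 + (1 - 2 * μ) * y ^ 2) + x ^ 2 * y * (l₁ * x ^ 2 + l₂ * (x ^ 2 + y ^ 2)))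
          * deriv (fun y' =>
              Real.exp (-2 * μ * x ^ 2 / (x ^ 2 + y' ^ 2)) * (x ^ 2 + y' ^ 2) ^ 3) y
      = (deriv (fun x' =>
            -y * ((2 * μ + 1) * x' ^ 2 + y ^ 2) + x' ^ 3 * (l₁ * x' ^ 2 + l₂ * (x' ^ 2 + y ^ 2))) x
          + deriv (fun y' =>
            x * (x ^ 2 + (1 - 2 * μ) * y' ^ 2) + x ^ 2 * y' * (l₁ * x ^ 2 + l₂ * (x ^ 2 + y' ^ 2))) y)
        * (Real.exp (-2 * μ * x ^ 2 / (x ^ 2 + y ^ 2)) * (x ^ 2 + y ^ 2) ^ 3) := by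
  intro x y hxy
  have hs : x ^ 2 + y ^ 2 ≠ 0 := by
    intro h
    apply hxy
    have hx : x = 0 := by nlinarith [sq_nonneg x, sq_nonneg y]
    have hy : y = 0 := by nlinarith [sq_nonneg x, sq_nonneg y]
    simp [hx, hy]
  -- derivative of V in x
  have hu : HasDerivAt (fun x' : ℝ => -2 * μ * x' ^ 2) (-2 * μ * (2 * x)) x := by
    simpa using (hasDerivAt_pow 2 x).const_mul (-2 * μ)
  have hv : HasDerivAt (fun x' : ℝ => x' ^ 2 + y ^ 2) (2 * x) x := by
    simpa using (hasDerivAt_pow 2 x).add_const (y ^ 2)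
  have hg : HasDerivAt (fun x' : ℝ => -2 * μ * x' ^ 2 / (x' ^ 2 + y ^ 2))
      ((-2 * μ * (2 * x) * (x ^ 2 + y ^ 2) - -2 * μ * x ^ 2 * (2 * x)) / (x ^ 2 + y ^ 2) ^ 2)
      x := hu.div hv hs
  have hV1 : HasDerivAt (fun x' =>
      Real.exp (-2 * μ * x' ^ 2 / (x' ^ 2 + y ^ 2)) * (x' ^ 2 + y ^ 2) ^ 3)
      (Real.exp (-2 * μ * x ^ 2 / (x ^ 2 + y ^ 2))
          * ((-2 * μ * (2 * x) * (x ^ 2 + y ^ 2) - -2 * μ * x ^ 2 * (2 * x)) / (x ^ 2 + y ^ 2) ^ 2)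
          * (x ^ 2 + y ^ 2) ^ 3
        + Real.exp (-2 * μ * x ^ 2 / (x ^ 2 + y ^ 2)) * (3 * (x ^ 2 + y ^ 2) ^ 2 * (2 * x))) x := by
    have := (hg.exp).fun_mul (hv.fun_pow 3)
    simpa using this
  -- derivative of V in y
  have hv2 : HasDerivAt (fun y' : ℝ => x ^ 2 + y' ^ 2) (2 * y) y := by
    simpa using (hasDerivAt_pow 2 y).const_add (x ^ 2)
  have hg2 : HasDerivAt (fun y' : ℝ => -2 * μ * x ^ 2 / (x ^ 2 + y' ^ 2))
      ((0 * (x ^ 2 + y ^ 2) - -2 * μ * x ^ 2 * (2 * y)) / (x ^ 2 + y ^ 2) ^ 2) y :=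
    (hasDerivAt_const y (-2 * μ * x ^ 2)).div hv2 hs
  have hV2 : HasDerivAt (fun y' =>
      Real.exp (-2 * μ * x ^ 2 / (x ^ 2 + y' ^ 2)) * (x ^ 2 + y' ^ 2) ^ 3)
      (Real.exp (-2 * μ * x ^ 2 / (x ^ 2 + y ^ 2))
          * ((0 * (x ^ 2 + y ^ 2) - -2 * μ * x ^ 2 * (2 * y)) / (x ^ 2 + y ^ 2) ^ 2)
          * (x ^ 2 + y ^ 2) ^ 3
        + Real.exp (-2 * μ * x ^ 2 / (x ^ 2 + y ^ 2)) * (3 * (x ^ 2 + y ^ 2) ^ 2 * (2 * y))) y := by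
    have := (hg2.exp).fun_mul (hv2.fun_pow 3)
    simpa using this
  -- derivative of P in x
  have hP : HasDerivAt (fun x' =>
      -y * ((2 * μ + 1) * x' ^ 2 + y ^ 2) + x' ^ 3 * (l₁ * x' ^ 2 + l₂ * (x' ^ 2 + y ^ 2)))
      (-y * ((2 * μ + 1) * (2 * x))
        + (3 * x ^ 2 * (l₁ * x ^ 2 + l₂ * (x ^ 2 + y ^ 2))
          + x ^ 3 * (l₁ * (2 * x) + l₂ * (2 * x)))) x := by
    have h1 : HasDerivAt (fun x' : ℝ => -y * ((2 * μ + 1) * x' ^ 2 + y ^ 2))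
        (-y * ((2 * μ + 1) * (2 * x))) x := by
      have := (((hasDerivAt_pow 2 x).const_mul (2 * μ + 1)).add_const (y ^ 2)).const_mul (-y)
      simpa [mul_comm, mul_assoc, mul_left_comm] using this
    have h2 : HasDerivAt (fun x' : ℝ => x' ^ 3 * (l₁ * x' ^ 2 + l₂ * (x' ^ 2 + y ^ 2)))
        (3 * x ^ 2 * (l₁ * x ^ 2 + l₂ * (x ^ 2 + y ^ 2))
          + x ^ 3 * (l₁ * (2 * x) + l₂ * (2 * x))) x := by
      have := (hasDerivAt_pow 3 x).fun_mul
        (((hasDerivAt_pow 2 x).const_mul l₁).fun_add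
          (((hasDerivAt_pow 2 x).add_const (y ^ 2)).const_mul l₂))
      simpa [mul_comm, mul_assoc, mul_left_comm] using this
    exact h1.add h2
  -- derivative of Q in y
  have hQ : HasDerivAt (fun y' =>
      x * (x ^ 2 + (1 - 2 * μ) * y' ^ 2) + x ^ 2 * y' * (l₁ * x ^ 2 + l₂ * (x ^ 2 + y' ^ 2)))
      (x * ((1 - 2 * μ) * (2 * y))
        + (x ^ 2 * (l₁ * x ^ 2 + l₂ * (x ^ 2 + y ^ 2)) + x ^ 2 * y * (l₂ * (2 * y)))) y := by
    have h1 : HasDerivAt (fun y' : ℝ => x * (x ^ 2 + (1 - 2 * μ) * y' ^ 2))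
        (x * ((1 - 2 * μ) * (2 * y))) y := by
      have := (((hasDerivAt_pow 2 y).const_mul (1 - 2 * μ)).const_add (x ^ 2)).const_mul x
      simpa [mul_comm, mul_assoc, mul_left_comm] using this
    have h2 : HasDerivAt (fun y' : ℝ => x ^ 2 * y' * (l₁ * x ^ 2 + l₂ * (x ^ 2 + y' ^ 2)))
        (x ^ 2 * (l₁ * x ^ 2 + l₂ * (x ^ 2 + y ^ 2)) + x ^ 2 * y * (l₂ * (2 * y))) y := by
      have hid : HasDerivAt (fun y' : ℝ => x ^ 2 * y') (x ^ 2) y := by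
        simpa using (hasDerivAt_id y).const_mul (x ^ 2)
      have := hid.fun_mul
        ((((hasDerivAt_pow 2 y).const_add (x ^ 2)).const_mul l₂).const_add (l₁ * x ^ 2))
      simpa [mul_comm, mul_assoc, mul_left_comm] using this
    exact h1.add h2
  rw [hV1.deriv, hV2.deriv, hP.deriv, hQ.deriv]
  field_simp
  ring
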